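/- Let α, β, γ be as above with β > 0 and not (γ = 0 and αβ = 4). Then e^{-4k₀d}·(g - j·h)(k₀) = ((4+det A)·(4+det A+√Δ)/(2β))·e^{-4k₀d} + (4α - (4+det A+√Δ)²/(4β))·e^{-2k₀d}, where Δ = (4+det A)² - 16αβ, det A = αβ + |γ|², k₀ = (4+det A+√Δ)/(4β); and since 16αβ < (4+det A+√Δ)², this expression is negative for all sufficiently large d > 0. -/

import Mathlib

open Real Filter Set

/-- For `α ≥ 0`, `β > 0`, `γ ∈ ℂ` not both `γ = 0` and `αβ = 4`, with
`det A = αβ + |γ|²`, `Δ = (4 + det A)² - 16αβ`, `k₀ = (4 + det A + √Δ)/(4β)`: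
for every `d > 0` the identity
`e^{-4k₀d}(g - j·h)(k₀) = ((4+det A)(4+det A+√Δ)/(2β))e^{-4k₀d}
  + (4α - (4+det A+√Δ)²/(4β))e^{-2k₀d}` holds, one has
`16αβ < (4 + det A + √Δ)²`, and the expression is negative for all sufficiently
large `d`. -/
theorem stmt10 (α β : ℝ) (γ : ℂ) (hα : 0 ≤ α) (hβ : 0 < β)
    (hexc : ¬(γ = 0 ∧ α*β = 4))
    (detA Δ k₀ : ℝ)
    (hdet : detA = α*β + ‖γ‖ ^ 2)
    (hΔ : Δ = (4 + detA)^2 - 16*α*β)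
    (hk₀ : k₀ = (4 + detA + Real.sqrt Δ) / (4*β)) :
    (∀ d : ℝ, 0 < d →
      Real.exp (-4*k₀*d) *
        (‖γ‖ ^ 2 * k₀ * (1 - Real.exp (4*k₀*d))
          - (Real.exp (2*k₀*d) * (1 + β/2*k₀) + Real.exp (4*k₀*d) * (1 - β/2*k₀))
            * ((-2*α - 4*k₀) * Real.exp (-2*k₀*d) - 2*α + 4*k₀))
      = ((4 + detA) * (4 + detA + Real.sqrt Δ) / (2*β)) * Real.exp (-4*k₀*d)
        + (4*α - (4 + detA + Real.sqrt Δ)^2 / (4*β)) * Real.exp (-2*k₀*d)) ∧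
    16*α*β < (4 + detA + Real.sqrt Δ)^2 ∧
    ∃ d₀ : ℝ, ∀ d : ℝ, d₀ ≤ d →
      ((4 + detA) * (4 + detA + Real.sqrt Δ) / (2*β)) * Real.exp (-4*k₀*d)
        + (4*α - (4 + detA + Real.sqrt Δ)^2 / (4*β)) * Real.exp (-2*k₀*d) < 0 := by
  set g : ℝ := ‖γ‖ ^ 2 with hgdef
  have hg : 0 ≤ g := sq_nonneg _
  have hΔpos : 0 < Δ := by
    by_cases hγ : γ = 0
    · have h4 : α*β ≠ 4 := fun h => hexc ⟨hγ, h⟩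
      have : g = 0 := by simp [hgdef, hγ]
      rw [hΔ, hdet, this]
      nlinarith [pow_pos (abs_pos.mpr (sub_ne_zero.mpr h4)) 2, sq_abs (α*β - 4)]
    · have hgpos : 0 < g := pow_pos (norm_pos_iff.mpr hγ) 2
      rw [hΔ, hdet]
      nlinarith [sq_nonneg (4 - α*β), mul_nonneg hα hβ.le]
  have hs2 : Real.sqrt Δ ^ 2 = Δ := Real.sq_sqrt hΔpos.le
  have hspos : 0 < Real.sqrt Δ := Real.sqrt_pos.mpr hΔpos
  have hDpos : 0 < 4 + detA := by rw [hdet]; nlinarith [mul_nonneg hα hβ.le]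
  have hSpos : 0 < 4 + detA + Real.sqrt Δ := by linarith
  have hroot : 2*β*k₀^2 - (4 + detA)*k₀ + 2*α = 0 := by
    rw [hk₀]
    field_simp
    nlinarith [hs2, hΔ]
  have hkpos : 0 < k₀ := by rw [hk₀]; positivity
  have part2 : 16*α*β < (4 + detA + Real.sqrt Δ)^2 := by nlinarith
  refine ⟨?_, part2, ?_⟩
  · intro d hd
    have e1 : Real.exp (-2*k₀*d) = (Real.exp (2*k₀*d))⁻¹ := by
      rw [show (-2*k₀*d : ℝ) = -(2*k₀*d) by ring, Real.exp_neg]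
    have e2 : Real.exp (4*k₀*d) = (Real.exp (2*k₀*d))^2 := by
      rw [← Real.exp_nat_mul]; ring_nf
    have e3 : Real.exp (-4*k₀*d) = ((Real.exp (2*k₀*d))^2)⁻¹ := by
      rw [show (-4*k₀*d : ℝ) = -(4*k₀*d) by ring, Real.exp_neg, e2]
    have hx : Real.exp (2*k₀*d) ≠ 0 := Real.exp_ne_zero _
    have hk : k₀ * (4*β) = 4 + detA + Real.sqrt Δ := by
      rw [hk₀]; field_simp
    have c1 : (4 + detA) * (4 + detA + Real.sqrt Δ) / (2*β) = 2*(4+detA)*k₀ := by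
      rw [← hk]; field_simp; ring
    have c2 : 4*α - (4 + detA + Real.sqrt Δ)^2 / (4*β) = 4*α - 4*β*k₀^2 := by
      rw [← hk]; field_simp
    rw [c1, c2, e1, e2, e3]
    field_simp
    ring_nf
    rw [hgdef] at hdet
    linear_combination (2*(1 + Real.exp (k₀*d*2)^2)) * hroot
      + (2*k₀*(Real.exp (k₀*d*2)^2 - 1)) * hdet
  · set C1 : ℝ := (4 + detA) * (4 + detA + Real.sqrt Δ) / (2*β) with hC1def
    set C2 : ℝ := 4*α - (4 + detA + Real.sqrt Δ)^2 / (4*β) with hC2def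
    have hC1 : 0 < C1 := by rw [hC1def]; positivity
    have hC2 : C2 < 0 := by
      have h1 : 4*α < (4 + detA + Real.sqrt Δ)^2 / (4*β) := by
        rw [lt_div_iff₀ (by positivity)]; nlinarith
      rw [hC2def]; linarith
    refine ⟨(Real.log (C1 / (-C2)) + 1) / (2*k₀), fun d hd => ?_⟩
    have h2k : 0 < 2*k₀ := by linarith
    have hle : Real.log (C1 / (-C2)) + 1 ≤ 2*k₀*d := by
      rw [div_le_iff₀ h2k] at hd; linarith [hd]
    have hexp : Real.exp (-2*k₀*d) < -C2 / C1 := by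
      have h1 : Real.exp (-2*k₀*d) ≤ Real.exp (-(Real.log (C1 / (-C2)) + 1)) := by
        apply Real.exp_le_exp.mpr; linarith
      have h2 : Real.exp (-(Real.log (C1 / (-C2)) + 1))
          < Real.exp (-(Real.log (C1 / (-C2)))) := by
        apply Real.exp_lt_exp.mpr; linarith
      have h3 : Real.exp (-(Real.log (C1 / (-C2)))) = -C2 / C1 := by
        rw [Real.exp_neg, Real.exp_log (div_pos hC1 (neg_pos.mpr hC2)), inv_div]
      calc Real.exp (-2*k₀*d) ≤ _ := h1
        _ < _ := h2
        _ = -C2 / C1 := h3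
    have key : C1 * Real.exp (-2*k₀*d) < -C2 := by
      rw [lt_div_iff₀ hC1] at hexp
      linarith
    have e4 : Real.exp (-4*k₀*d) = Real.exp (-2*k₀*d) * Real.exp (-2*k₀*d) := by
      rw [← Real.exp_add]; ring_nf
    rw [e4]
    nlinarith [key, Real.exp_pos (-2*k₀*d)]
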